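/- Let X₁, …, X_n be independent real-valued random variables with E X_i = 0 and E X_i² ≤ b_i². Then for every t ∈ (2,4], E|S_n|^t ≤ 2^{max(0, t−3)}·(A(t) + (t−1)·B_n^t), where S_n = ∑X_i, A(t) = ∑E|X_i|^t, B_n = (∑b_i²)^{1/2}. -/

import Mathlib

open MeasureTheory ProbabilityTheory Filter
open scoped NNReal ENNReal

section RosenthalAux

lemma core_rpow {p : ℝ} (hp : 0 < p) {a b : ℝ} (ha : 0 ≤ a) (hb : 0 ≤ b) :
    (a + b) ^ p ≤ 2 ^ max 0 (p - 1) * (a ^ p + b ^ p) := by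
  lift a to ℝ≥0 using ha
  lift b to ℝ≥0 using hb
  rcases le_or_gt p 1 with h1 | h1
  · rw [max_eq_left (by linarith), Real.rpow_zero, one_mul]
    exact_mod_cast NNReal.rpow_add_le_add_rpow a b hp.le h1
  · rw [max_eq_right (by linarith)]
    exact_mod_cast NNReal.rpow_add_le_mul_rpow_add_rpow a b h1.le

lemma hasDerivAt_self_mul_abs_rpow {p : ℝ} (hp : 0 < p) (w : ℝ) :
    HasDerivAt (fun w : ℝ => w * |w| ^ p) ((p + 1) * |w| ^ p) w := by
  rcases lt_trichotomy w 0 with hw | rfl | hw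
  · have h2 : HasDerivAt (fun y : ℝ => y ^ (p + 1)) ((p + 1) * (-w) ^ p) (-w) := by
      have := Real.hasDerivAt_rpow_const (x := -w) (p := p + 1) (Or.inl (by linarith))
      simpa [add_sub_cancel_right] using this
    have h3 : HasDerivAt (fun x : ℝ => -((-x) ^ (p + 1))) ((p + 1) * (-w) ^ p) w := by
      have h := (h2.comp w ((hasDerivAt_id w).neg)).neg
      simp at h
      exact h
    rw [abs_of_neg hw]
    refine h3.congr_of_eventuallyEq ?_
    filter_upwards [Iio_mem_nhds hw] with x hx
    have hx0 : (0:ℝ) < -x := by simpa using hx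
    rw [abs_of_neg hx, Real.rpow_add_one (by linarith : -x ≠ 0)]
    ring
  · rw [hasDerivAt_iff_tendsto_slope]
    have h0 : ((p : ℝ) + 1) * |(0:ℝ)| ^ p = 0 := by
      rw [abs_zero, Real.zero_rpow hp.ne', mul_zero]
    rw [h0]
    have htend : Tendsto (fun x : ℝ => |x| ^ p) (nhds 0) (nhds 0) := by
      have h : ContinuousAt (fun x : ℝ => |x| ^ p) 0 :=
        (Real.continuousAt_rpow_const (|(0:ℝ)|) p (Or.inr hp.le)).comp
          continuous_abs.continuousAt
      have := h.tendsto
      simpa [abs_zero, Real.zero_rpow hp.ne'] using this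
    refine Tendsto.congr' ?_ (htend.mono_left nhdsWithin_le_nhds)
    filter_upwards [self_mem_nhdsWithin] with x hx
    have hx0 : x ≠ 0 := hx
    rw [slope_def_field]
    field_simp
    simp
  · have h2 : HasDerivAt (fun y : ℝ => y ^ (p + 1)) ((p + 1) * w ^ p) w := by
      have := Real.hasDerivAt_rpow_const (x := w) (p := p + 1) (Or.inl hw.ne')
      simpa [add_sub_cancel_right] using this
    rw [abs_of_pos hw]
    refine h2.congr_of_eventuallyEq ?_
    filter_upwards [Ioi_mem_nhds hw] with x hx
    rw [abs_of_pos hx, Real.rpow_add_one (ne_of_gt hx)]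
    ring

lemma pointwise_star {t : ℝ} (ht2 : 2 < t) (ht4 : t ≤ 4) (x y : ℝ) :
    |x + y| ^ t ≤ |x| ^ t + t * (x * |x| ^ (t - 2)) * y
      + 2 ^ max 0 (t - 3) * t * (t - 1) / 2 * (|x| ^ (t - 2) * y ^ 2)
      + 2 ^ max 0 (t - 3) * |y| ^ t := by
  set c : ℝ := 2 ^ max 0 (t - 3) with hc
  have hc0 : (0:ℝ) ≤ c := Real.rpow_nonneg (by norm_num) _
  have ht0 : (0:ℝ) < t := by linarith
  have hq0 : (0:ℝ) < t - 2 := by linarith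
  have hcore : ∀ z w : ℝ, |z + w| ^ (t - 2) ≤ c * (|z| ^ (t - 2) + |w| ^ (t - 2)) := by
    intro z w
    calc |z + w| ^ (t - 2) ≤ (|z| + |w|) ^ (t - 2) :=
          Real.rpow_le_rpow (abs_nonneg _) (abs_add_le _ _) hq0.le
      _ ≤ 2 ^ max 0 (t - 2 - 1) * (|z| ^ (t - 2) + |w| ^ (t - 2)) :=
          core_rpow hq0 (abs_nonneg _) (abs_nonneg _)
      _ = c * (|z| ^ (t - 2) + |w| ^ (t - 2)) := by
          rw [show t - 2 - 1 = t - 3 by ring, ← hc]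
  set G : ℝ → ℝ := fun y => |x| ^ t + t * (x * |x| ^ (t - 2)) * y
      + c * t * (t - 1) / 2 * (|x| ^ (t - 2) * y ^ 2) + c * |y| ^ t - |x + y| ^ t with hG
  set Φ : ℝ → ℝ := fun y => t * (x * |x| ^ (t - 2)) + c * t * (t - 1) * (|x| ^ (t - 2) * y)
      + c * (t * (y * |y| ^ (t - 2))) - t * ((x + y) * |x + y| ^ (t - 2)) with hΦ
  have hGderiv : ∀ y : ℝ, HasDerivAt G (Φ y) y := by
    intro y
    have h1 : HasDerivAt (fun y : ℝ => t * (x * |x| ^ (t - 2)) * y)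
        (t * (x * |x| ^ (t - 2))) y := by
      simpa using (hasDerivAt_id y).const_mul (t * (x * |x| ^ (t - 2)))
    have h2 : HasDerivAt (fun y : ℝ => c * t * (t - 1) / 2 * (|x| ^ (t - 2) * y ^ 2))
        (c * t * (t - 1) * (|x| ^ (t - 2) * y)) y := by
      have h := (hasDerivAt_pow 2 y).const_mul (c * t * (t - 1) / 2 * |x| ^ (t - 2))
      convert h using 1
      · rfl
      · rfl
      · funext z; ring
      · push_cast; ring
    have h3 : HasDerivAt (fun y : ℝ => c * |y| ^ t) (c * (t * (y * |y| ^ (t - 2)))) y := by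
      have h := (hasDerivAt_abs_rpow y (by linarith : 1 < t)).const_mul c
      convert h using 1
      · rfl
      · rfl
      ring
    have h4 : HasDerivAt (fun y : ℝ => |x + y| ^ t) (t * ((x + y) * |x + y| ^ (t - 2))) y := by
      have h := (hasDerivAt_abs_rpow (x + y) (by linarith : 1 < t)).comp y
        ((hasDerivAt_id y).const_add x)
      convert h using 1
      · rfl
      · rfl
      · rfl
      ring
    have h := ((((hasDerivAt_const y (|x| ^ t)).add h1).add h2).add h3).sub h4
    simp only [hG, hΦ]
    convert h using 1
    · rfl
    · rfl
    · rfl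
    ring
  have hΦderiv : ∀ y : ℝ, HasDerivAt Φ
      (c * t * (t - 1) * |x| ^ (t - 2) + c * (t * ((t - 1) * |y| ^ (t - 2)))
        - t * ((t - 1) * |x + y| ^ (t - 2))) y := by
    intro y
    have h1 : HasDerivAt (fun y : ℝ => c * t * (t - 1) * (|x| ^ (t - 2) * y))
        (c * t * (t - 1) * |x| ^ (t - 2)) y := by
      have h := (hasDerivAt_id y).const_mul (c * t * (t - 1) * |x| ^ (t - 2))
      simp only [id_eq, mul_one] at h
      convert h using 1
      · rfl
      · rfl
      funext z; ring
    have h2 : HasDerivAt (fun y : ℝ => c * (t * (y * |y| ^ (t - 2))))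
        (c * (t * ((t - 1) * |y| ^ (t - 2)))) y := by
      have h := ((hasDerivAt_self_mul_abs_rpow hq0 y).const_mul t).const_mul c
      convert h using 1
      · rfl
      · rfl
      · ring
    have h3 : HasDerivAt (fun y : ℝ => t * ((x + y) * |x + y| ^ (t - 2)))
        (t * ((t - 1) * |x + y| ^ (t - 2))) y := by
      have h := ((hasDerivAt_self_mul_abs_rpow hq0 (x + y)).comp y
        ((hasDerivAt_id y).const_add x)).const_mul t
      convert h using 1
      · rfl
      · rfl
      · rfl
      ring
    have h := (((hasDerivAt_const y (t * (x * |x| ^ (t - 2)))).add h1).add h2).sub h3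
    simp only [hΦ]
    convert h using 1
    · rfl
    · rfl
    · rfl
    ring
  have hΦmono : Monotone Φ := by
    refine monotone_of_hasDerivAt_nonneg hΦderiv ?_
    refine Pi.le_def.mpr fun y => ?_
    have h := hcore x y
    have h2 : t * (t - 1) * |x + y| ^ (t - 2)
        ≤ t * (t - 1) * (c * (|x| ^ (t - 2) + |y| ^ (t - 2))) :=
      mul_le_mul_of_nonneg_left h (by nlinarith)
    simp only [Pi.zero_apply]
    nlinarith [h2]
  have hΦ0 : Φ 0 = 0 := by simp [hΦ]
  have hGcont : Continuous G := by
    have hdiff : Differentiable ℝ G := fun y => (hGderiv y).differentiableAt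
    exact hdiff.continuous
  have hmono : MonotoneOn G (Set.Ici 0) := by
    refine monotoneOn_of_hasDerivWithinAt_nonneg (convex_Ici 0) hGcont.continuousOn
      (fun y _ => (hGderiv y).hasDerivWithinAt) ?_
    intro y hy
    rw [interior_Ici] at hy
    have h := hΦmono (le_of_lt hy : (0:ℝ) ≤ y)
    rw [hΦ0] at h
    exact h
  have hanti : AntitoneOn G (Set.Iic 0) := by
    refine antitoneOn_of_hasDerivWithinAt_nonpos (convex_Iic 0) hGcont.continuousOn
      (fun y _ => (hGderiv y).hasDerivWithinAt) ?_
    intro y hy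
    rw [interior_Iic] at hy
    have h := hΦmono (le_of_lt hy : y ≤ (0:ℝ))
    rw [hΦ0] at h
    exact h
  have hG0 : G 0 = 0 := by
    simp [hG, Real.zero_rpow (ne_of_gt ht0)]
  have hGy : 0 ≤ G y := by
    rcases le_total 0 y with hy | hy
    · have h := hmono Set.self_mem_Ici (Set.mem_Ici.2 hy) hy
      rw [hG0] at h; exact h
    · have h := hanti (Set.mem_Iic.2 hy) Set.self_mem_Iic hy
      rw [hG0] at h; exact h
  simp only [hG] at hGy
  linarith [hGy]

lemma integral_rpow_le_rpow_integral {Ω : Type*} [MeasurableSpace Ω] {μ : Measure Ω}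
    [IsProbabilityMeasure μ] {f : Ω → ℝ} {r : ℝ} (hr0 : 0 < r) (hr1 : r ≤ 1)
    (hf : ∀ ω, 0 ≤ f ω) (hfi : Integrable f μ) :
    ∫ ω, f ω ^ r ∂μ ≤ (∫ ω, f ω ∂μ) ^ r := by
  rcases eq_or_lt_of_le hr1 with rfl | hr1'
  · simp
  have hp : Real.HolderConjugate (1 / r) (1 / (1 - r)) := by
    rw [Real.holderConjugate_iff]
    constructor
    · exact one_lt_one_div hr0 hr1'
    · rw [one_div, one_div, inv_inv, inv_inv]; ring
  have hmem1 : MemLp f 1 μ := (memLp_one_iff_integrable).2 hfi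
  have hfr : MemLp (fun ω => f ω ^ r) (ENNReal.ofReal (1 / r)) μ := by
    have h := hmem1.norm_rpow_div (ENNReal.ofReal r)
    have he : (1 : ℝ≥0∞) / ENNReal.ofReal r = ENNReal.ofReal (1 / r) := by
      rw [one_div, one_div, ← ENNReal.ofReal_inv_of_pos hr0]
    have htr : (ENNReal.ofReal r).toReal = r := ENNReal.toReal_ofReal hr0.le
    rw [he, htr] at h
    refine MemLp.ae_eq (ae_of_all _ fun ω => ?_) h
    rw [Real.norm_of_nonneg (hf ω)]
  have hhold := integral_mul_le_Lp_mul_Lq_of_nonneg hp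
    (f := fun ω => f ω ^ r) (g := fun _ => (1 : ℝ))
    (ae_of_all _ fun ω => Real.rpow_nonneg (hf ω) r) (ae_of_all _ fun _ => zero_le_one)
    hfr (memLp_const 1)
  have h1 : ∫ ω, f ω ^ r * 1 ∂μ = ∫ ω, f ω ^ r ∂μ := by simp
  have h2 : ∫ ω, (f ω ^ r) ^ (1 / r) ∂μ = ∫ ω, f ω ∂μ := by
    congr 1
    funext ω
    rw [← Real.rpow_mul (hf ω), mul_one_div, div_self hr0.ne', Real.rpow_one]
  have h3 : ∫ ω, (1 : ℝ) ^ (1 / (1 - r)) ∂μ = 1 := by simp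
  rw [h1, h2, h3] at hhold
  calc ∫ ω, f ω ^ r ∂μ ≤ (∫ ω, f ω ∂μ) ^ (1 / (1 / r)) * 1 ^ (1 / (1 / (1 - r))) := hhold
    _ = (∫ ω, f ω ∂μ) ^ r := by rw [one_div_one_div, Real.one_rpow, mul_one]

lemma bernoulli_rpow {p : ℝ} (hp : 1 ≤ p) {u v : ℝ} (hu : 0 ≤ u) (hv : 0 ≤ v) :
    u ^ p + p * u ^ (p - 1) * v ≤ (u + v) ^ p := by
  rcases eq_or_lt_of_le hu with rfl | hu'
  · rcases eq_or_lt_of_le hp with rfl | hp'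
    · simp
    · rw [Real.zero_rpow (by linarith : p ≠ 0), Real.zero_rpow (by linarith : p - 1 ≠ 0)]
      simp only [zero_add, mul_zero, zero_mul, add_zero]
      exact Real.rpow_nonneg hv p
  · have h1 : (-1 : ℝ) ≤ v / u := le_trans (by norm_num) (div_nonneg hv hu'.le)
    have h2 := one_add_mul_self_le_rpow_one_add h1 hp
    have h3 : (u + v) ^ p = u ^ p * (1 + v / u) ^ p := by
      rw [← Real.mul_rpow hu'.le (by positivity)]
      congr 1
      field_simp
    have h4 : u ^ (p - 1) = u ^ p / u := Real.rpow_sub_one hu'.ne' p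
    have h5 := mul_le_mul_of_nonneg_left h2 (Real.rpow_nonneg hu'.le p)
    rw [h3, h4]
    calc u ^ p + p * (u ^ p / u) * v = u ^ p * (1 + p * (v / u)) := by field_simp
      _ ≤ u ^ p * (1 + v / u) ^ p := h5

end RosenthalAux

theorem rosenthal_indep_2_4 {Ω : Type*} [MeasurableSpace Ω] (μ : Measure Ω)
    [IsProbabilityMeasure μ] (n : ℕ) (X : Fin n → Ω → ℝ) (b : Fin n → ℝ)
    (t : ℝ) (ht : t ∈ Set.Ioc (2 : ℝ) 4)
    (hmeas : ∀ i, Measurable (X i))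
    (hindep : iIndepFun X μ)
    (hb : ∀ i, 0 < b i)
    (hmean : ∀ i, ∫ ω, X i ω ∂μ = 0)
    (hvar : ∀ i, ∫ ω, (X i ω) ^ 2 ∂μ ≤ (b i) ^ 2)
    (hint : ∀ i, Integrable (fun ω => |X i ω| ^ t) μ) :
    ∫ ω, |∑ i, X i ω| ^ t ∂μ ≤
      2 ^ (max 0 (t - 3)) *
        ((∑ i, ∫ ω, |X i ω| ^ t ∂μ) + (t - 1) * (∑ i, (b i) ^ 2) ^ (t / 2)) := by
  obtain ⟨ht2, ht4⟩ := ht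
  have ht0 : (0:ℝ) < t := by linarith
  have htne0 : t ≠ 0 := ne_of_gt ht0
  set c : ℝ := 2 ^ (max 0 (t - 3)) with hc
  have hc1 : (1:ℝ) ≤ c := by
    have h : (2:ℝ) ^ (0:ℝ) ≤ 2 ^ max 0 (t - 3) :=
      Real.rpow_le_rpow_of_exponent_le one_le_two (le_max_left _ _)
    simpa [hc] using h
  have hc0 : (0:ℝ) ≤ c := by linarith
  -- basic ENNReal facts
  have htne : ENNReal.ofReal t ≠ 0 := by
    simp only [ne_eq, ENNReal.ofReal_eq_zero, not_le]; exact ht0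
  have htnetop : ENNReal.ofReal t ≠ ⊤ := ENNReal.ofReal_ne_top
  have httoReal : (ENNReal.ofReal t).toReal = t := ENNReal.toReal_ofReal ht0.le
  have h2t : (2 : ℝ≥0∞) ≤ ENNReal.ofReal t := by
    rw [show (2:ℝ≥0∞) = ENNReal.ofReal 2 by norm_num]
    exact ENNReal.ofReal_le_ofReal ht2.le
  -- the Xᵢ are in L^t and L^2
  have hXmem : ∀ i, MemLp (X i) (ENNReal.ofReal t) μ := by
    intro i
    apply (memLp_norm_rpow_iff (p := ENNReal.ofReal t) (q := ENNReal.ofReal t)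
      (hmeas i).aestronglyMeasurable htne htnetop).1
    rw [ENNReal.div_self htne htnetop, httoReal]
    exact (memLp_one_iff_integrable).2 (by simpa [Real.norm_eq_abs] using hint i)
  have hX2 : ∀ i, MemLp (X i) 2 μ := fun i => (hXmem i).mono_exponent h2t
  have hXint : ∀ i, Integrable (X i) μ := fun i => (hX2 i).integrable one_le_two
  have hXsq : ∀ i, Integrable (fun ω => X i ω ^ 2) μ := fun i => (hX2 i).integrable_sq
  -- partial sums
  have hSmeas : ∀ s : Finset (Fin n), Measurable (fun ω => ∑ i ∈ s, X i ω) :=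
    fun s => Finset.measurable_sum s fun i _ => hmeas i
  have hSmem : ∀ s : Finset (Fin n), MemLp (fun ω => ∑ i ∈ s, X i ω) (ENNReal.ofReal t) μ :=
    fun s => memLp_finset_sum s fun i _ => hXmem i
  have hS2 : ∀ s : Finset (Fin n), MemLp (fun ω => ∑ i ∈ s, X i ω) 2 μ :=
    fun s => (hSmem s).mono_exponent h2t
  have hSsqint : ∀ s, Integrable (fun ω => (∑ i ∈ s, X i ω) ^ 2) μ :=
    fun s => (hS2 s).integrable_sq
  have hSint : ∀ s, Integrable (fun ω => ∑ i ∈ s, X i ω) μ :=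
    fun s => (hS2 s).integrable one_le_two
  have hSt : ∀ s, Integrable (fun ω => |∑ i ∈ s, X i ω| ^ t) μ := by
    intro s
    have h := (hSmem s).integrable_norm_rpow htne htnetop
    simpa [httoReal, Real.norm_eq_abs] using h
  have hSr : ∀ (s : Finset (Fin n)) (r : ℝ), 0 < r → r ≤ t →
      Integrable (fun ω => |∑ i ∈ s, X i ω| ^ r) μ := by
    intro s r hr0 hrt
    refine Integrable.mono' ((hSt s).add (integrable_const 1))
      (((hSmeas s).abs.pow measurable_const).aestronglyMeasurable) (ae_of_all _ fun ω => ?_)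
    rw [Real.norm_eq_abs, abs_of_nonneg (Real.rpow_nonneg (abs_nonneg _) _)]
    simp only [Pi.add_apply]
    rcases le_total (|∑ i ∈ s, X i ω|) 1 with h | h
    · have h1 : |∑ i ∈ s, X i ω| ^ r ≤ 1 := Real.rpow_le_one (abs_nonneg _) h hr0.le
      have h2 : 0 ≤ |∑ i ∈ s, X i ω| ^ t := Real.rpow_nonneg (abs_nonneg _) _
      linarith
    · have h1 : |∑ i ∈ s, X i ω| ^ r ≤ |∑ i ∈ s, X i ω| ^ t :=
        Real.rpow_le_rpow_of_exponent_le h hrt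
      linarith
  have hSodd : ∀ s : Finset (Fin n),
      Integrable (fun ω => (∑ i ∈ s, X i ω) * |∑ i ∈ s, X i ω| ^ (t - 2)) μ := by
    intro s
    refine Integrable.mono' ((hSt s).add (integrable_const 1))
      (((hSmeas s).mul ((hSmeas s).abs.pow measurable_const)).aestronglyMeasurable)
      (ae_of_all _ fun ω => ?_)
    have he : |∑ i ∈ s, X i ω| * |∑ i ∈ s, X i ω| ^ (t - 2) = |∑ i ∈ s, X i ω| ^ (t - 1) := by
      rw [show t - 1 = 1 + (t - 2) by ring,
        Real.rpow_one_add' (abs_nonneg _) (by intro h; nlinarith [h])]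
    rw [Real.norm_eq_abs, abs_mul, abs_of_nonneg (Real.rpow_nonneg (abs_nonneg _) _), he]
    simp only [Pi.add_apply]
    rcases le_total (|∑ i ∈ s, X i ω|) 1 with h | h
    · have h1 : |∑ i ∈ s, X i ω| ^ (t - 1) ≤ 1 :=
        Real.rpow_le_one (abs_nonneg _) h (by linarith)
      have h2 : 0 ≤ |∑ i ∈ s, X i ω| ^ t := Real.rpow_nonneg (abs_nonneg _) _
      linarith
    · have h1 : |∑ i ∈ s, X i ω| ^ (t - 1) ≤ |∑ i ∈ s, X i ω| ^ t :=
        Real.rpow_le_rpow_of_exponent_le h (by linarith)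
      linarith
  -- independence of partial sums
  have hIndepS : ∀ (s : Finset (Fin n)) (j : Fin n), j ∉ s →
      IndepFun (fun ω => ∑ i ∈ s, X i ω) (X j) μ := by
    intro s j hj
    have h := hindep.indepFun_finset_sum_of_notMem hmeas hj
    have he : (∑ i ∈ s, X i) = fun ω => ∑ i ∈ s, X i ω := by funext ω; simp
    rwa [he] at h
  -- second moments of partial sums
  have hVnn : ∀ s : Finset (Fin n), (0:ℝ) ≤ ∑ i ∈ s, b i ^ 2 :=
    fun s => Finset.sum_nonneg fun i _ => sq_nonneg _
  have hvar_sum : ∀ s : Finset (Fin n), ∫ ω, (∑ i ∈ s, X i ω) ^ 2 ∂μ ≤ ∑ i ∈ s, b i ^ 2 := by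
    intro s
    induction s using Finset.induction_on with
    | empty => simp
    | @insert j s hj IH =>
      have hind := hIndepS s j hj
      have hXYint : Integrable (fun ω => X j ω * ∑ i ∈ s, X i ω) μ :=
        hind.symm.integrable_mul (hXint j) (hSint s)
      have hIXY : ∫ ω, X j ω * ∑ i ∈ s, X i ω ∂μ = 0 := by
        have h' : (fun ω => X j ω * ∑ i ∈ s, X i ω)
            = (X j * fun ω => ∑ i ∈ s, X i ω) := rfl
        rw [h', hind.symm.integral_mul_eq_mul_integral (hXint j).aestronglyMeasurable (hSint s).aestronglyMeasurable, hmean j, zero_mul]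
      have hA : Integrable (fun ω => X j ω ^ 2 + 2 * (X j ω * ∑ i ∈ s, X i ω)) μ :=
        (hXsq j).add (hXYint.const_mul 2)
      calc ∫ ω, (∑ i ∈ insert j s, X i ω) ^ 2 ∂μ
          = ∫ ω, (X j ω ^ 2 + 2 * (X j ω * ∑ i ∈ s, X i ω) + (∑ i ∈ s, X i ω) ^ 2) ∂μ := by
            congr 1; funext ω; rw [Finset.sum_insert hj]; ring
        _ = (∫ ω, X j ω ^ 2 ∂μ) + (∫ ω, 2 * (X j ω * ∑ i ∈ s, X i ω) ∂μ)
              + ∫ ω, (∑ i ∈ s, X i ω) ^ 2 ∂μ := by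
            rw [integral_add hA (hSsqint s), integral_add (hXsq j) (hXYint.const_mul 2)]
        _ = (∫ ω, X j ω ^ 2 ∂μ) + ∫ ω, (∑ i ∈ s, X i ω) ^ 2 ∂μ := by
            rw [integral_const_mul, hIXY, mul_zero, add_zero]
        _ ≤ b j ^ 2 + ∑ i ∈ s, b i ^ 2 := add_le_add (hvar j) IH
        _ = ∑ i ∈ insert j s, b i ^ 2 := by rw [Finset.sum_insert hj]
  -- Lyapunov bound
  have hlyap : ∀ s : Finset (Fin n),
      ∫ ω, |∑ i ∈ s, X i ω| ^ (t - 2) ∂μ ≤ (∑ i ∈ s, b i ^ 2) ^ ((t - 2) / 2) := by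
    intro s
    have habs : ∀ ω, |∑ i ∈ s, X i ω| ^ (t - 2) = ((∑ i ∈ s, X i ω) ^ 2) ^ ((t - 2) / 2) := by
      intro ω
      rw [← sq_abs, ← Real.rpow_natCast (|∑ i ∈ s, X i ω|) 2, ← Real.rpow_mul (abs_nonneg _)]
      congr 1
      push_cast
      ring
    calc ∫ ω, |∑ i ∈ s, X i ω| ^ (t - 2) ∂μ
        = ∫ ω, ((∑ i ∈ s, X i ω) ^ 2) ^ ((t - 2) / 2) ∂μ := by congr 1; funext ω; exact habs ω
      _ ≤ (∫ ω, (∑ i ∈ s, X i ω) ^ 2 ∂μ) ^ ((t - 2) / 2) :=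
          integral_rpow_le_rpow_integral (by linarith) (by linarith)
            (fun ω => sq_nonneg _) (hSsqint s)
      _ ≤ (∑ i ∈ s, b i ^ 2) ^ ((t - 2) / 2) :=
          Real.rpow_le_rpow (integral_nonneg fun ω => sq_nonneg _) (hvar_sum s) (by linarith)
  -- main induction
  have key : ∀ s : Finset (Fin n), ∫ ω, |∑ i ∈ s, X i ω| ^ t ∂μ ≤
      c * ((∑ i ∈ s, ∫ ω, |X i ω| ^ t ∂μ) + (t - 1) * (∑ i ∈ s, b i ^ 2) ^ (t / 2)) := by
    intro s
    induction s using Finset.induction_on with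
    | empty =>
      simp [Real.zero_rpow htne0, Real.zero_rpow (show t / 2 ≠ 0 by positivity)]
    | @insert j s hj IH =>
      have hind := hIndepS s j hj
      -- the comparison function g
      have hφm : Measurable (fun w : ℝ => w * |w| ^ (t - 2)) :=
        measurable_id.mul (measurable_id.abs.pow measurable_const)
      have hψm : Measurable (fun w : ℝ => |w| ^ (t - 2)) :=
        measurable_id.abs.pow measurable_const
      have hsqm : Measurable (fun v : ℝ => v ^ 2) := measurable_id.pow_const 2
      have hindc : IndepFun (fun ω => (∑ i ∈ s, X i ω) * |∑ i ∈ s, X i ω| ^ (t - 2)) (X j) μ :=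
        hind.comp hφm measurable_id
      have hind2 : IndepFun (fun ω => |∑ i ∈ s, X i ω| ^ (t - 2)) (fun ω => X j ω ^ 2) μ :=
        hind.comp hψm hsqm
      have hmul1 : Integrable
          (fun ω => ((∑ i ∈ s, X i ω) * |∑ i ∈ s, X i ω| ^ (t - 2)) * X j ω) μ :=
        hindc.integrable_mul (hSodd s) (hXint j)
      have hmul2 : Integrable (fun ω => |∑ i ∈ s, X i ω| ^ (t - 2) * X j ω ^ 2) μ :=
        hind2.integrable_mul (hSr s (t - 2) (by linarith) (by linarith)) (hXsq j)
      -- integral identities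
      have hI1 : ∫ ω, ((∑ i ∈ s, X i ω) * |∑ i ∈ s, X i ω| ^ (t - 2)) * X j ω ∂μ = 0 := by
        have h' : (fun ω => ((∑ i ∈ s, X i ω) * |∑ i ∈ s, X i ω| ^ (t - 2)) * X j ω)
            = ((fun ω => (∑ i ∈ s, X i ω) * |∑ i ∈ s, X i ω| ^ (t - 2)) * X j) := rfl
        rw [h', hindc.integral_mul_eq_mul_integral (hSodd s).aestronglyMeasurable (hXint j).aestronglyMeasurable, hmean j, mul_zero]
      have hI2 : ∫ ω, |∑ i ∈ s, X i ω| ^ (t - 2) * X j ω ^ 2 ∂μ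
          = (∫ ω, |∑ i ∈ s, X i ω| ^ (t - 2) ∂μ) * ∫ ω, X j ω ^ 2 ∂μ := by
        have h' : (fun ω => |∑ i ∈ s, X i ω| ^ (t - 2) * X j ω ^ 2)
            = ((fun ω => |∑ i ∈ s, X i ω| ^ (t - 2)) * fun ω => X j ω ^ 2) := rfl
        rw [h', hind2.integral_mul_eq_mul_integral
          (hSr s (t - 2) (by linarith) (by linarith)).aestronglyMeasurable (hXsq j).aestronglyMeasurable]
      -- pointwise bound and integration
      have hg : Integrable (fun ω => |∑ i ∈ s, X i ω| ^ t
          + t * (((∑ i ∈ s, X i ω) * |∑ i ∈ s, X i ω| ^ (t - 2)) * X j ω)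
          + c * t * (t - 1) / 2 * (|∑ i ∈ s, X i ω| ^ (t - 2) * X j ω ^ 2)
          + c * |X j ω| ^ t) μ :=
        (((hSt s).add (hmul1.const_mul t)).add
          (hmul2.const_mul (c * t * (t - 1) / 2))).add ((hint j).const_mul c)
      have hstep1 : ∫ ω, |∑ i ∈ insert j s, X i ω| ^ t ∂μ
          ≤ ∫ ω, (|∑ i ∈ s, X i ω| ^ t
            + t * (((∑ i ∈ s, X i ω) * |∑ i ∈ s, X i ω| ^ (t - 2)) * X j ω)
            + c * t * (t - 1) / 2 * (|∑ i ∈ s, X i ω| ^ (t - 2) * X j ω ^ 2)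
            + c * |X j ω| ^ t) ∂μ := by
        refine integral_mono (by simpa [Finset.sum_insert hj] using hSt (insert j s)) hg
          fun ω => ?_
        have h := pointwise_star ht2 ht4 (∑ i ∈ s, X i ω) (X j ω)
        rw [Finset.sum_insert hj, add_comm (X j ω)]
        rw [← hc] at h
        nlinarith [h]
      have hstep2 : ∫ ω, (|∑ i ∈ s, X i ω| ^ t
            + t * (((∑ i ∈ s, X i ω) * |∑ i ∈ s, X i ω| ^ (t - 2)) * X j ω)
            + c * t * (t - 1) / 2 * (|∑ i ∈ s, X i ω| ^ (t - 2) * X j ω ^ 2)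
            + c * |X j ω| ^ t) ∂μ
          = (∫ ω, |∑ i ∈ s, X i ω| ^ t ∂μ)
            + c * t * (t - 1) / 2 * ((∫ ω, |∑ i ∈ s, X i ω| ^ (t - 2) ∂μ) * ∫ ω, X j ω ^ 2 ∂μ)
            + c * ∫ ω, |X j ω| ^ t ∂μ := by
        have hB1 : Integrable (fun ω => |∑ i ∈ s, X i ω| ^ t
            + t * (((∑ i ∈ s, X i ω) * |∑ i ∈ s, X i ω| ^ (t - 2)) * X j ω)) μ :=
          (hSt s).add (hmul1.const_mul t)
        have hB2 : Integrable (fun ω => |∑ i ∈ s, X i ω| ^ t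
            + t * (((∑ i ∈ s, X i ω) * |∑ i ∈ s, X i ω| ^ (t - 2)) * X j ω)
            + c * t * (t - 1) / 2 * (|∑ i ∈ s, X i ω| ^ (t - 2) * X j ω ^ 2)) μ :=
          hB1.add (hmul2.const_mul (c * t * (t - 1) / 2))
        rw [integral_add hB2 ((hint j).const_mul c),
          integral_add hB1 (hmul2.const_mul (c * t * (t - 1) / 2)),
          integral_add (hSt s) (hmul1.const_mul t),
          integral_const_mul, integral_const_mul, integral_const_mul, hI1, hI2, mul_zero]
        ring
      -- bound the middle term
      have hprod : (∫ ω, |∑ i ∈ s, X i ω| ^ (t - 2) ∂μ) * ∫ ω, X j ω ^ 2 ∂μ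
          ≤ (∑ i ∈ s, b i ^ 2) ^ ((t - 2) / 2) * b j ^ 2 :=
        mul_le_mul (hlyap s) (hvar j) (integral_nonneg fun ω => sq_nonneg _)
          (Real.rpow_nonneg (hVnn s) _)
      have hbern : (∑ i ∈ s, b i ^ 2) ^ (t / 2)
            + t / 2 * ((∑ i ∈ s, b i ^ 2) ^ ((t - 2) / 2)) * b j ^ 2
          ≤ (b j ^ 2 + ∑ i ∈ s, b i ^ 2) ^ (t / 2) := by
        have h := bernoulli_rpow (by linarith : (1:ℝ) ≤ t / 2) (hVnn s) (sq_nonneg (b j))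
        rw [show t / 2 - 1 = (t - 2) / 2 by ring] at h
        rw [add_comm (b j ^ 2)]
        exact h
      -- put everything together
      rw [Finset.sum_insert hj, Finset.sum_insert hj]
      have hC0 : 0 ≤ c * t * (t - 1) / 2 := by
        have h := mul_nonneg (mul_nonneg hc0 ht0.le) (show (0:ℝ) ≤ t - 1 by linarith)
        linarith
      have h5 : c * t * (t - 1) / 2 * ((∫ ω, |∑ i ∈ s, X i ω| ^ (t - 2) ∂μ)
            * ∫ ω, X j ω ^ 2 ∂μ)
          ≤ c * t * (t - 1) / 2 * ((∑ i ∈ s, b i ^ 2) ^ ((t - 2) / 2) * b j ^ 2) :=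
        mul_le_mul_of_nonneg_left hprod hC0
      have h6 : c * (t - 1) * ((∑ i ∈ s, b i ^ 2) ^ (t / 2)
            + t / 2 * ((∑ i ∈ s, b i ^ 2) ^ ((t - 2) / 2)) * b j ^ 2)
          ≤ c * (t - 1) * ((b j ^ 2 + ∑ i ∈ s, b i ^ 2) ^ (t / 2)) :=
        mul_le_mul_of_nonneg_left hbern (by nlinarith)
      calc ∫ ω, |∑ i ∈ insert j s, X i ω| ^ t ∂μ
          ≤ (∫ ω, |∑ i ∈ s, X i ω| ^ t ∂μ)
            + c * t * (t - 1) / 2 * ((∫ ω, |∑ i ∈ s, X i ω| ^ (t - 2) ∂μ)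
              * ∫ ω, X j ω ^ 2 ∂μ)
            + c * ∫ ω, |X j ω| ^ t ∂μ := by rw [← hstep2]; exact hstep1
        _ ≤ c * (((∫ ω, |X j ω| ^ t ∂μ) + ∑ i ∈ s, ∫ ω, |X i ω| ^ t ∂μ)
              + (t - 1) * (b j ^ 2 + ∑ i ∈ s, b i ^ 2) ^ (t / 2)) := by nlinarith [IH, h5, h6]
  have h := key Finset.univ
  simpa using h
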